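/- Let E ⊆ ℂ be a nonempty closed set satisfying condition (U)_{1,α} for some α > 1. Then there exist positive constants A, C, r₀ and γ, with (log(1/(Ct)))^{−γ} positive and increasing in t on (0, 2r₀), such that for every increasing function g : (0,∞) → (0,∞) satisfying g(t) = (log(1/(Ct)))^{−γ} for all t ∈ (0, 2r₀), and for every a ∈ E and every r ∈ (0, r₀), one has Λ_g(E ∩ B̄(a,r)) ≥ A·g(2r), where B̄(a,r) is the closed disc of center a and radius r. -/

import Mathlib

open Metric Set
open scoped ENNReal

/-- A set `E ⊆ ℂ` satisfies condition `(U)_{1,α}`. -/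
def CondU1 (E : Set ℂ) (α : ℝ) : Prop :=
  ∃ C > (0 : ℝ), ∃ r₀ > (0 : ℝ), ∀ a ∈ E, ∀ r ∈ Set.Ioo (0 : ℝ) r₀,
    ({z : ℂ | C * r ^ α ≤ dist z a ∧ dist z a ≤ r} ∩ E).Nonempty

/-- The `g`-Hausdorff content of `F ⊆ ℂ`:
`Λ_g(F) = inf { ∑ₖ g(diam Bₖ) : (Bₖ) a countable cover of F by closed discs }`. -/
noncomputable def hContent (g : ℝ → ℝ) (F : Set ℂ) : ℝ≥0∞ :=
  ⨅ (B : ℕ → ℂ × ℝ) (_ : ∀ k, 0 ≤ (B k).2)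
    (_ : F ⊆ ⋃ k, closedBall (B k).1 (B k).2),
    ∑' k, ENNReal.ofReal (g (diam (closedBall (B k).1 (B k).2)))

/-- Scale sequence for the Cantor-type construction. -/
noncomputable def rhoSeq (c α r : ℝ) : ℕ → ℝ
  | 0 => r
  | n + 1 => c * (rhoSeq c α r n / 2) ^ α

/-- Tree of points in `E`, indexed by (level, index in `[0, 2^level)`). -/
noncomputable def treeY (yf : ℂ → ℝ → ℂ) (c α r : ℝ) (a : ℂ) : ℕ → ℕ → ℂ
  | 0, _ => a
  | n + 1, j =>
      if j % 2 = 0 then treeY yf c α r a n (j / 2)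
      else yf (treeY yf c α r a n (j / 2)) (rhoSeq c α r n / 2)

set_option maxHeartbeats 1000000 in
/-- If a nonempty closed set `E ⊆ ℂ` satisfies `(U)_{1,α}` for some `α > 1`,
then there are `A, C, r₀, γ > 0` with `(log(1/(Ct)))^(−γ)` positive and
increasing on `(0, 2r₀)`, such that for every increasing
`g : (0,∞) → (0,∞)` agreeing with `(log(1/(Ct)))^(−γ)` on `(0, 2r₀)` one has
`Λ_g(E ∩ B̄(a,r)) ≥ A·g(2r)` for all `a ∈ E`, `r ∈ (0, r₀)`. -/
theorem stmt_13 (E : Set ℂ) (hne : E.Nonempty) (hcl : IsClosed E)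
    (α : ℝ) (hα : 1 < α) (hU : CondU1 E α) :
    ∃ A > (0 : ℝ), ∃ C > (0 : ℝ), ∃ r₀ > (0 : ℝ), ∃ γ > (0 : ℝ),
      (∀ t ∈ Set.Ioo (0 : ℝ) (2 * r₀), 0 < (Real.log (1 / (C * t))) ^ (-γ)) ∧
      MonotoneOn (fun t : ℝ => (Real.log (1 / (C * t))) ^ (-γ))
        (Set.Ioo (0 : ℝ) (2 * r₀)) ∧
      ∀ g : ℝ → ℝ, (∀ t ∈ Set.Ioi (0 : ℝ), 0 < g t) →
        MonotoneOn g (Set.Ioi (0 : ℝ)) →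
        (∀ t ∈ Set.Ioo (0 : ℝ) (2 * r₀), g t = (Real.log (1 / (C * t))) ^ (-γ)) →
        ∀ a ∈ E, ∀ r ∈ Set.Ioo (0 : ℝ) r₀,
          ENNReal.ofReal (A * g (2 * r)) ≤ hContent g (E ∩ closedBall a r) := by
  classical
  obtain ⟨C₀, hC₀pos, r₁, hr₁pos, hann⟩ := hU
  -- basic numerics
  have hα0 : (0:ℝ) < α := by linarith
  have hlogα : 0 < Real.log α := Real.log_pos hα
  have hlog2 : 0 < Real.log 2 := Real.log_pos (by norm_num)
  set c₀ : ℝ := min C₀ 1 with hc₀def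
  have hc₀pos : 0 < c₀ := lt_min hC₀pos one_pos
  have hc₀le1 : c₀ ≤ 1 := min_le_right _ _
  set c : ℝ := c₀ / 4 with hcdef
  have hcpos : 0 < c := by positivity
  have hcle : c ≤ 1/4 := by
    rw [hcdef]; linarith
  set r₂ : ℝ := min r₁ 1 with hr₂def
  have hr₂pos : 0 < r₂ := lt_min hr₁pos one_pos
  have hr₂le1 : r₂ ≤ 1 := min_le_right _ _
  have hr₂ler₁ : r₂ ≤ r₁ := min_le_left _ _
  set r₀ : ℝ := r₂ / 2 with hr₀def
  have hr₀pos : 0 < r₀ := by positivity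
  set γ : ℝ := Real.log 2 / Real.log α with hγdef
  have hγpos : 0 < γ := by positivity
  set b : ℝ := Real.log (1/c) + α * Real.log 2 with hbdef
  have hlogc : 0 < Real.log (1/c) := Real.log_pos (by
    rw [lt_div_iff₀ hcpos]; linarith)
  have hbpos : 0 < b := by rw [hbdef]; positivity
  set B : ℝ := b / (α - 1) with hBdef
  have hBpos : 0 < B := by rw [hBdef]; exact div_pos hbpos (by linarith)
  set Q : ℝ := 2 + B / Real.log 2 with hQdef
  have hQ2 : 2 ≤ Q := by rw [hQdef]; nlinarith [div_pos hBpos hlog2]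
  have hαQ2 : 2 ≤ α * Q := by nlinarith
  have hαQpos : 0 < α * Q := by linarith
  set A : ℝ := (α * Q) ^ (-γ) with hAdef
  have hApos : 0 < A := Real.rpow_pos_of_pos hαQpos _
  set C : ℝ := (1/4 : ℝ) with hCdef
  have hCpos : (0:ℝ) < C := by rw [hCdef]; norm_num
  have h2γ : α ^ γ = 2 := by
    rw [hγdef, Real.rpow_def_of_pos hα0]
    rw [show Real.log α * (Real.log 2 / Real.log α) = Real.log 2 by
      field_simp]
    exact Real.exp_log (by norm_num)
  have hinv : ∀ u v : ℝ, 0 < u → u ≤ v → v ^ (-γ) ≤ u ^ (-γ) := by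
    intro u v hu huv
    rw [Real.rpow_neg hu.le, Real.rpow_neg (hu.trans_le huv).le]
    exact inv_anti₀ (Real.rpow_pos_of_pos hu γ)
      (Real.rpow_le_rpow hu.le huv hγpos.le)
  have hlogpos : ∀ t ∈ Set.Ioo (0:ℝ) (2 * r₀), 0 < Real.log (1 / (C * t)) := by
    intro t ht
    apply Real.log_pos
    rw [lt_div_iff₀ (mul_pos hCpos ht.1)]
    have h2r₀ : 2 * r₀ = r₂ := by rw [hr₀def]; ring
    have ht2 : t < 1 := by linarith [h2r₀ ▸ ht.2, hr₂le1]
    rw [hCdef]; linarith [ht.1]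
  refine ⟨A, hApos, C, by rw [hCdef]; norm_num, r₀, hr₀pos, γ, hγpos, ?_, ?_, ?_⟩
  · intro t ht
    exact Real.rpow_pos_of_pos (hlogpos t ht) _
  · intro t₁ h₁ t₂ h₂ hle
    have l₁pos := hlogpos t₁ h₁
    have l₂pos := hlogpos t₂ h₂
    exact hinv _ _ l₂pos (Real.log_le_log
      (div_pos one_pos (mul_pos hCpos h₂.1))
      (one_div_le_one_div_of_le (mul_pos hCpos h₁.1)
        (mul_le_mul_of_nonneg_left hle hCpos.le)))
  · intro g hgpos hgmono hgform a ha r hr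
    obtain ⟨hrpos, hrlt⟩ := hr
    have hrle : r ≤ 1/2 := by
      have : r₀ ≤ 1/2 := by rw [hr₀def]; linarith
      linarith
    -- the choice function
    have hann' : ∀ x ∈ E, ∀ s ∈ Set.Ioo (0:ℝ) r₁,
        ∃ y, y ∈ E ∧ c₀ * s ^ α ≤ dist y x ∧ dist y x ≤ s := by
      intro x hx s hs
      obtain ⟨y, hy1, hy2⟩ := hann x hx s hs
      exact ⟨y, hy2, le_trans (mul_le_mul_of_nonneg_right (min_le_left _ _)
        (Real.rpow_nonneg hs.1.le α)) hy1.1, hy1.2⟩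
    choose! yf hyfE hyfl hyfu using hann'
    obtain ⟨ρ, Y, hρ0, hρs, hY0, hYs⟩ :
        ∃ (ρ : ℕ → ℝ) (Y : ℕ → ℕ → ℂ),
          ρ 0 = r ∧ (∀ n, ρ (n+1) = c * (ρ n / 2) ^ α) ∧
          (∀ j, Y 0 j = a) ∧
          (∀ n j, Y (n+1) j =
            if j % 2 = 0 then Y n (j / 2) else yf (Y n (j / 2)) (ρ n / 2)) := by
      refine ⟨rhoSeq c α r, treeY yf c α r a, rfl, fun n => rfl,
        fun j => rfl, fun n j => rfl⟩
    have hρbase : ∀ n, 0 < ρ n ∧ ρ n ≤ r := by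
      intro n
      induction n with
      | zero => rw [hρ0]; exact ⟨hrpos, le_refl r⟩
      | succ n ih =>
        have h1 : 0 < ρ n / 2 := by linarith [ih.1]
        have h2 : ρ n / 2 ≤ 1 := by linarith [ih.2]
        have h3 : (ρ n / 2) ^ α ≤ ρ n / 2 := by
          calc (ρ n / 2) ^ α ≤ (ρ n / 2) ^ (1:ℝ) :=
            Real.rpow_le_rpow_of_exponent_ge h1 h2 hα.le
          _ = ρ n / 2 := Real.rpow_one _
        constructor
        · rw [hρs]; exact mul_pos hcpos (Real.rpow_pos_of_pos h1 α)
        · rw [hρs]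
          calc c * (ρ n / 2) ^ α ≤ 1 * (ρ n / 2) :=
            mul_le_mul (by linarith) h3 (Real.rpow_pos_of_pos h1 α).le one_pos.le
          _ ≤ r := by linarith [ih.2]
    have hρpos : ∀ n, 0 < ρ n := fun n => (hρbase n).1
    have hρler : ∀ n, ρ n ≤ r := fun n => (hρbase n).2
    have hρhalf : ∀ n, ρ (n+1) ≤ ρ n / 2 := by
      intro n
      have h1 : 0 < ρ n / 2 := by linarith [hρpos n]
      have h2 : ρ n / 2 ≤ 1 := by linarith [hρler n]
      have h3 : (ρ n / 2) ^ α ≤ ρ n / 2 := by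
        calc (ρ n / 2) ^ α ≤ (ρ n / 2) ^ (1:ℝ) :=
          Real.rpow_le_rpow_of_exponent_ge h1 h2 hα.le
        _ = ρ n / 2 := Real.rpow_one _
      rw [hρs]
      calc c * (ρ n / 2) ^ α ≤ 1 * (ρ n / 2) :=
        mul_le_mul (by linarith) h3 (Real.rpow_pos_of_pos h1 α).le one_pos.le
      _ = ρ n / 2 := one_mul _
    have hρgeo : ∀ n, ρ n ≤ r * (1/2)^n := by
      intro n
      induction n with
      | zero => simp [hρ0]
      | succ n ih =>
        calc ρ (n+1) ≤ ρ n / 2 := hρhalf n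
        _ ≤ (r * (1/2)^n) / 2 := by linarith
        _ = r * (1/2)^(n+1) := by ring
    have hsIoo : ∀ n, ρ n / 2 ∈ Set.Ioo (0:ℝ) r₁ := by
      intro n
      constructor
      · linarith [hρpos n]
      · have : ρ n ≤ r := hρler n
        have hrr : r < r₂ / 2 := hrlt
        linarith [hr₂ler₁, hr₂pos]
    have hYE : ∀ n j, Y n j ∈ E := by
      intro n
      induction n with
      | zero => intro j; rw [hY0]; exact ha
      | succ n ih =>
        intro j
        rw [hYs]
        by_cases h : j % 2 = 0
        · simp only [h, if_true]; exact ih _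
        · simp only [h, if_false]
          exact hyfE _ (ih _) _ (hsIoo n)
    have hYc : ∀ n j, dist (Y (n+1) j) (Y n (j/2)) ≤ ρ n / 2 := by
      intro n j
      rw [hYs]
      by_cases h : j % 2 = 0
      · simp only [h, if_true, dist_self]; linarith [hρpos n]
      · simp only [h, if_false]
        exact hyfu _ (hYE n _) _ (hsIoo n)
    have hYsep : ∀ n, ∀ j < 2^n, ∀ i < 2^n, j ≠ i →
        3 * ρ n < dist (Y n j) (Y n i) := by
      intro n
      induction n with
      | zero => intro j hj i hi hne; omega
      | succ n ih =>
        intro j hj i hi hne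
        have hj2 : j / 2 < 2^n := by
          rw [Nat.div_lt_iff_lt_mul (by norm_num)]
          rw [pow_succ] at hj; exact hj
        have hi2 : i / 2 < 2^n := by
          rw [Nat.div_lt_iff_lt_mul (by norm_num)]
          rw [pow_succ] at hi; exact hi
        by_cases hpar : j / 2 = i / 2
        · -- siblings
          have key : ∀ u v : ℕ, u / 2 = v / 2 → u % 2 = 0 → v % 2 = 1 →
              3 * ρ (n+1) < dist (Y (n+1) u) (Y (n+1) v) := by
            intro u v hp hu hv
            have e1 : Y (n+1) u = Y n (u/2) := by rw [hYs]; simp [hu]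
            have e2 : Y (n+1) v = yf (Y n (v/2)) (ρ n / 2) := by
              rw [hYs]; simp [hv]
            rw [e1, e2, hp, dist_comm]
            have hlow := hyfl _ (hYE n (v/2)) _ (hsIoo n)
            have heq : c₀ * (ρ n / 2) ^ α = 4 * ρ (n+1) := by
              rw [hρs, hcdef]; ring
            rw [heq] at hlow
            linarith [hρpos (n+1)]
          rcases Nat.mod_two_eq_zero_or_one j with hj0 | hj1
          · have hi1 : i % 2 = 1 := by omega
            exact key j i hpar hj0 hi1
          · have hi0 : i % 2 = 0 := by omega
            rw [dist_comm]
            exact key i j hpar.symm hi0 hj1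
        · -- different parents
          have hsep := ih (j/2) hj2 (i/2) hi2 hpar
          have t4 := dist_triangle4 (Y n (j/2)) (Y (n+1) j) (Y (n+1) i) (Y n (i/2))
          have c1 := hYc n j
          have c2 := hYc n i
          rw [dist_comm (Y n (j/2)) (Y (n+1) j)] at t4
          have hh := hρhalf n
          have hp := hρpos (n+1)
          have hpn := hρpos n
          linarith
    -- the limit map
    obtain ⟨X, hX⟩ : ∃ X : ℕ → ℝ → ℂ,
        ∀ n t, X n t = Y n (Nat.floor ((2:ℝ)^n * t)) :=
      ⟨_, fun n t => rfl⟩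
    have hXfloor : ∀ n (t : ℝ),
        Nat.floor ((2:ℝ)^n * t) = Nat.floor ((2:ℝ)^(n+1) * t) / 2 := by
      intro n t
      have h : (2:ℝ)^n * t = ((2:ℝ)^(n+1) * t) / ((2:ℕ) : ℝ) := by
        push_cast; ring
      rw [h, Nat.floor_div_natCast]
    have hXsucc : ∀ n (t : ℝ), dist (X (n+1) t) (X n t) ≤ ρ n / 2 := by
      intro n t
      rw [hX, hX, hXfloor n t]
      exact hYc n _
    have hcauchy : ∀ t : ℝ, ∃ z, Filter.Tendsto (fun n => X n t) Filter.atTop (nhds z) := by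
      intro t
      apply cauchySeq_tendsto_of_complete
      apply cauchySeq_of_le_geometric (1/2) r (by norm_num)
      intro n
      rw [dist_comm]
      calc dist (X (n+1) t) (X n t) ≤ ρ n / 2 := hXsucc n t
      _ ≤ r * (1/2)^n := by linarith [hρgeo n, hρpos n]
    choose G hG using hcauchy
    have hGdist : ∀ (t : ℝ) n, dist (G t) (X n t) ≤ ρ n := by
      intro t n
      have hstep : ∀ m, n ≤ m → dist (X m t) (X n t) ≤ ρ n - ρ m := by
        intro m hm
        induction m, hm using Nat.le_induction with
        | base => simp
        | succ m hm ih =>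
          have h1 := hXsucc m t
          have h2 := hρhalf m
          have t3 := dist_triangle (X (m+1) t) (X m t) (X n t)
          linarith
      have htd : Filter.Tendsto (fun m => dist (X m t) (X n t)) Filter.atTop
          (nhds (dist (G t) (X n t))) := (hG t).dist tendsto_const_nhds
      refine le_of_tendsto htd ?_
      filter_upwards [Filter.eventually_ge_atTop n] with m hm
      linarith [hstep m hm, hρpos m]
    have hGY : ∀ (t : ℝ) n, dist (G t) (Y n (Nat.floor ((2:ℝ)^n * t))) ≤ ρ n := by
      intro t n
      have := hGdist t n
      rwa [hX] at this
    have hGE : ∀ t : ℝ, G t ∈ E := by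
      intro t
      refine hcl.mem_of_tendsto (hG t) (Filter.Eventually.of_forall fun n => ?_)
      rw [hX]; exact hYE n _
    have hGa : ∀ t : ℝ, dist (G t) a ≤ r := by
      intro t
      have h := hGY t 0
      rw [hY0, hρ0] at h
      simpa using h
    -- the cylinder estimate
    have hcyl : ∀ (z : ℂ) (s : ℝ) (d : ℝ), 0 ≤ d →
        (∀ p ∈ closedBall z s, ∀ q ∈ closedBall z s, dist p q ≤ d) →
        ∀ n, d ≤ ρ n →
        MeasureTheory.volume (Ico (0:ℝ) 1 ∩ G ⁻¹' closedBall z s) ≤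
          ENNReal.ofReal ((1:ℝ)/2^n) := by
      intro z s d hd hdiam n hdn
      set T := Ico (0:ℝ) 1 ∩ G ⁻¹' closedBall z s with hTdef
      rcases eq_empty_or_nonempty T with hT | ⟨t₀, ht₀⟩
      · rw [hT, MeasureTheory.measure_empty]; exact zero_le
      obtain ⟨⟨ht₀0, ht₀1⟩, ht₀D⟩ := ht₀
      set j := Nat.floor ((2:ℝ)^n * t₀) with hjdef
      have hjlt : j < 2^n := by
        rw [hjdef, Nat.floor_lt (mul_nonneg (by positivity) ht₀0)]
        push_cast
        exact mul_lt_of_lt_one_right (by positivity) ht₀1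
      have hsub : T ⊆ Ico ((j:ℝ)/2^n) (((j:ℝ)+1)/2^n) := by
        rintro t ⟨⟨ht0, ht1⟩, htD⟩
        have hilt : Nat.floor ((2:ℝ)^n * t) < 2^n := by
          rw [Nat.floor_lt (mul_nonneg (by positivity) ht0)]
          push_cast
          exact mul_lt_of_lt_one_right (by positivity) ht1
        have hieq : Nat.floor ((2:ℝ)^n * t) = j := by
          by_contra hne
          have hsep := hYsep n _ hilt j hjlt hne
          have h1 : dist (G t) (Y n (Nat.floor ((2:ℝ)^n * t))) ≤ ρ n := hGY t n
          have h2 : dist (G t₀) (Y n j) ≤ ρ n := hGY t₀ n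
          have h3 : dist (G t) (G t₀) ≤ d := hdiam _ htD _ ht₀D
          have t4 := dist_triangle4 (Y n (Nat.floor ((2:ℝ)^n * t))) (G t) (G t₀) (Y n j)
          rw [dist_comm (Y n (Nat.floor ((2:ℝ)^n * t))) (G t)] at t4
          linarith
        have hfl := (Nat.floor_eq_iff (mul_nonneg (by positivity : (0:ℝ) ≤ (2:ℝ)^n) ht0)).1 hieq
        have hpow : (0:ℝ) < 2^n := by positivity
        constructor
        · rw [div_le_iff₀ hpow]; linarith [hfl.1]
        · rw [lt_div_iff₀ hpow]; linarith [hfl.2]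
      calc MeasureTheory.volume T ≤
          MeasureTheory.volume (Ico ((j:ℝ)/2^n) (((j:ℝ)+1)/2^n)) :=
            MeasureTheory.measure_mono hsub
      _ = ENNReal.ofReal (((j:ℝ)+1)/2^n - (j:ℝ)/2^n) := Real.volume_Ico
      _ = ENNReal.ofReal ((1:ℝ)/2^n) := by congr 1; ring
    -- log bounds
    set X₀ : ℝ := Real.log (1/(C * (2*r))) with hX₀def
    have hC2r : 1/(C * (2*r)) = 2/r := by
      rw [hCdef]; field_simp; ring
    have hX₀log2 : Real.log 2 ≤ X₀ := by
      rw [hX₀def, hC2r]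
      apply Real.log_le_log (by norm_num)
      rw [le_div_iff₀ hrpos]; linarith
    have hX₀pos : 0 < X₀ := lt_of_lt_of_le hlog2 hX₀log2
    obtain ⟨M, hMn⟩ : ∃ M : ℕ → ℝ, ∀ n, M n = Real.log (1/(C * ρ n)) :=
      ⟨_, fun _ => rfl⟩
    have hMeq : ∀ n, M n = -Real.log C - Real.log (ρ n) := by
      intro n
      rw [hMn n]
      rw [one_div, Real.log_inv, Real.log_mul (by rw [hCdef]; norm_num) (hρpos n).ne']
      ring
    have hM0 : M 0 = Real.log 2 + X₀ := by
      rw [hMeq 0, hρ0, hX₀def, hC2r, Real.log_div (by norm_num) hrpos.ne', hCdef]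
      have : Real.log (1/4 : ℝ) = -(2 * Real.log 2) := by
        rw [one_div, Real.log_inv]
        rw [show (4:ℝ) = 2^2 by norm_num, Real.log_pow]
        push_cast; ring
      rw [this]; ring
    have hMpos : ∀ n, 0 < M n := by
      intro n
      rw [hMn n]
      apply Real.log_pos
      rw [lt_div_iff₀ (by rw [hCdef]; linarith [hρpos n] : 0 < C * ρ n), hCdef]
      nlinarith [hρler n, hρpos n]
    have hMrec : ∀ n, M (n+1) ≤ α * M n + b := by
      intro n
      have hlogρs : Real.log (ρ (n+1)) =
          Real.log c + α * (Real.log (ρ n) - Real.log 2) := by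
        rw [hρs, Real.log_mul hcpos.ne' (Real.rpow_pos_of_pos (by linarith [hρpos n]) α).ne',
          Real.log_rpow (by linarith [hρpos n]),
          Real.log_div (hρpos n).ne' (by norm_num)]
      have hbeq : b = -Real.log c + α * Real.log 2 := by
        rw [hbdef, one_div, Real.log_inv]
      have hlogC : Real.log C < 0 := by
        rw [hCdef]; exact Real.log_neg (by norm_num) (by norm_num)
      have e1 : M (n+1) = α * M n + ((α - 1) * Real.log C - Real.log c + α * Real.log 2) := by
        rw [hMeq (n+1), hMeq n, hlogρs]; ring
      have hprod : (α - 1) * Real.log C ≤ 0 :=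
        mul_nonpos_iff.2 (Or.inl ⟨by linarith, hlogC.le⟩)
      rw [e1, hbeq]
      linarith
    have hbB : b = (α - 1) * B := by
      have h1 : α - 1 ≠ 0 := by linarith
      rw [hBdef]; field_simp
    have hMbound : ∀ n, M n + B ≤ α^n * Q * X₀ := by
      intro n
      induction n with
      | zero =>
        rw [hM0, pow_zero, one_mul, hQdef]
        have hu : B / Real.log 2 * Real.log 2 = B := by field_simp
        have h1 : B / Real.log 2 * Real.log 2 ≤ B / Real.log 2 * X₀ := by
          apply mul_le_mul_of_nonneg_left hX₀log2 (by positivity)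
        have expand : (2 + B / Real.log 2) * X₀ = 2 * X₀ + B / Real.log 2 * X₀ := by
          ring
        rw [expand]
        linarith
      | succ n ih =>
        have h1 := hMrec n
        have h2 : α * (M n + B) ≤ α * (α^n * Q * X₀) :=
          mul_le_mul_of_nonneg_left ih hα0.le
        have h3 : α^(n+1) * Q * X₀ = α * (α^n * Q * X₀) := by rw [pow_succ]; ring
        calc M (n+1) + B ≤ (α * M n + b) + B := by linarith
        _ = α * (M n + B) := by rw [hbB]; ring
        _ ≤ α * (α^n * Q * X₀) := h2
        _ = α^(n+1) * Q * X₀ := h3.symm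
    -- rpow computation : (α^(n+1))^γ = 2^(n+1)
    have hpowγ : ∀ n : ℕ, ((α^(n+1) : ℝ)) ^ γ = 2^(n+1) := by
      intro n
      rw [← Real.rpow_natCast α (n+1), ← Real.rpow_mul hα0.le, mul_comm,
        Real.rpow_mul hα0.le, h2γ, Real.rpow_natCast]
    -- g values
    have h2rIoo : (2*r) ∈ Set.Ioo (0:ℝ) (2*r₀) := ⟨by linarith, by linarith⟩
    have hg2r : g (2*r) = X₀ ^ (-γ) := by rw [hgform _ h2rIoo, hX₀def]
    -- per-ball estimate
    have hball : ∀ (z : ℂ) (s : ℝ), 0 ≤ s →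
        ENNReal.ofReal (A * g (2*r)) *
          MeasureTheory.volume (Ico (0:ℝ) 1 ∩ G ⁻¹' closedBall z s) ≤
        ENNReal.ofReal (g (diam (closedBall z s))) := by
      intro z s hs
      set d : ℝ := diam (closedBall z s) with hddef
      have hd0 : 0 ≤ d := diam_nonneg
      have hdiam : ∀ p ∈ closedBall z s, ∀ q ∈ closedBall z s, dist p q ≤ d :=
        fun p hp q hq => dist_le_diam_of_mem (isBounded_closedBall) hp hq
      rcases eq_or_lt_of_le hd0 with hd | hdpos
      · -- d = 0 : the volume vanishes
        have hv0 : MeasureTheory.volume (Ico (0:ℝ) 1 ∩ G ⁻¹' closedBall z s) = 0 := by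
          have hbnd : ∀ n : ℕ, MeasureTheory.volume (Ico (0:ℝ) 1 ∩ G ⁻¹' closedBall z s) ≤
              ENNReal.ofReal ((1/2:ℝ)^n) := by
            intro n
            have := hcyl z s d hd0 hdiam n (by rw [← hd]; exact (hρpos n).le)
            rwa [← one_div_pow] at this
          have htend : Filter.Tendsto (fun n : ℕ => ENNReal.ofReal ((1/2:ℝ)^n))
              Filter.atTop (nhds 0) := by
            rw [← ENNReal.ofReal_zero]
            exact ENNReal.tendsto_ofReal
              (tendsto_pow_atTop_nhds_zero_of_lt_one (by norm_num) (by norm_num))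
          exact le_antisymm (ge_of_tendsto htend (Filter.Eventually.of_forall hbnd))
            (zero_le)
        rw [hv0, mul_zero]
        exact zero_le
      · by_cases hcase : d ≤ r
        · -- small ball : find the right level
          have hex : ∃ m, ρ m < d := by
            obtain ⟨m, hm⟩ := exists_pow_lt_of_lt_one
              (show 0 < d / r by positivity) (show (1/2:ℝ) < 1 by norm_num)
            refine ⟨m, lt_of_le_of_lt (hρgeo m) ?_⟩
            rw [lt_div_iff₀ hrpos] at hm
            linarith [hm]
          set n' := Nat.find hex with hn'def
          have hn'spec : ρ n' < d := Nat.find_spec hex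
          have hn'pos : n' ≠ 0 := by
            intro h
            rw [h, hρ0] at hn'spec
            linarith
          obtain ⟨n, hn⟩ : ∃ n, n' = n + 1 :=
            ⟨n' - 1, (Nat.succ_pred_eq_of_pos (Nat.pos_of_ne_zero hn'pos)).symm⟩
          have hle : d ≤ ρ n := by
            have := Nat.find_min hex (show n < n' by omega)
            linarith [not_lt.1 this]
          have hlt : ρ (n+1) < d := by rw [← hn]; exact hn'spec
          have hv := hcyl z s d hd0 hdiam n hle
          -- g value at d
          have hdIoo : d ∈ Set.Ioo (0:ℝ) (2*r₀) := ⟨hdpos, by linarith⟩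
          have hgd : g d = (Real.log (1/(C*d))) ^ (-γ) := hgform _ hdIoo
          set Mt : ℝ := Real.log (1/(C*d)) with hMtdef
          have hMtpos : 0 < Mt := hlogpos d hdIoo
          have hMtle : Mt ≤ M (n+1) := by
            rw [hMtdef, hMn (n+1)]
            apply Real.log_le_log (div_pos one_pos (mul_pos hCpos hdpos))
            apply one_div_le_one_div_of_le (mul_pos hCpos (hρpos (n+1)))
            exact mul_le_mul_of_nonneg_left hlt.le hCpos.le
          have hMub : Mt ≤ α^(n+1) * Q * X₀ := by
            linarith [hMbound (n+1), hBpos]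
          -- core real inequality
          have hcore : A * X₀^(-γ) * ((1:ℝ)/2^n) ≤ Mt^(-γ) := by
            have e1 : A * X₀^(-γ) * ((1:ℝ)/2^n) =
                (((α*Q) * X₀)^γ * 2^n)⁻¹ := by
              rw [hAdef, Real.rpow_neg hαQpos.le, Real.rpow_neg hX₀pos.le,
                Real.mul_rpow hαQpos.le hX₀pos.le, one_div]
              rw [mul_inv]
              ring
            have e2 : Mt^(-γ) = (Mt^γ)⁻¹ := Real.rpow_neg hMtpos.le _
            rw [e1, e2]
            apply inv_anti₀ (Real.rpow_pos_of_pos hMtpos γ)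
            calc Mt^γ ≤ (α^(n+1) * Q * X₀)^γ :=
              Real.rpow_le_rpow hMtpos.le hMub hγpos.le
            _ = (α^(n+1))^γ * (Q * X₀)^γ := by
                rw [mul_assoc, Real.mul_rpow (by positivity) (by positivity)]
            _ = 2^(n+1) * (Q * X₀)^γ := by rw [hpowγ n]
            _ = ((α*Q) * X₀)^γ * 2^n := by
                rw [mul_assoc, Real.mul_rpow hα0.le (by positivity), h2γ]
                rw [pow_succ]; ring
          calc ENNReal.ofReal (A * g (2*r)) *
              MeasureTheory.volume (Ico (0:ℝ) 1 ∩ G ⁻¹' closedBall z s)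
              ≤ ENNReal.ofReal (A * g (2*r)) * ENNReal.ofReal ((1:ℝ)/2^n) :=
                mul_le_mul_right hv _
          _ = ENNReal.ofReal (A * g (2*r) * ((1:ℝ)/2^n)) := by
                rw [← ENNReal.ofReal_mul (mul_nonneg hApos.le
                  (hgpos _ (mem_Ioi.2 (by linarith))).le)]
          _ ≤ ENNReal.ofReal (g d) := by
                apply ENNReal.ofReal_le_ofReal
                rw [hg2r, hgd]
                exact hcore
        · -- large ball
          push_neg at hcase
          have hvol : MeasureTheory.volume (Ico (0:ℝ) 1 ∩ G ⁻¹' closedBall z s) ≤ 1 := by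
            calc MeasureTheory.volume (Ico (0:ℝ) 1 ∩ G ⁻¹' closedBall z s)
                ≤ MeasureTheory.volume (Ico (0:ℝ) 1) :=
                  MeasureTheory.measure_mono inter_subset_left
            _ = 1 := by rw [Real.volume_Ico]; norm_num
          have hrIoo : r ∈ Set.Ioo (0:ℝ) (2*r₀) := ⟨hrpos, by linarith⟩
          have hgr : g r = (M 0) ^ (-γ) := by
            rw [hgform _ hrIoo, hMn 0, hρ0]
          have hgle : g r ≤ g d :=
            hgmono (mem_Ioi.2 hrpos) (mem_Ioi.2 (by linarith)) hcase.le
          have hcore : A * X₀^(-γ) ≤ (M 0)^(-γ) := by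
            have e1 : A * X₀^(-γ) = ((α*Q) * X₀)^(-γ) := by
              rw [Real.mul_rpow hαQpos.le hX₀pos.le, hAdef]
            rw [e1]
            apply hinv _ _ (hMpos 0)
            rw [hM0]
            have h5 : 2 * X₀ ≤ (α * Q) * X₀ :=
              mul_le_mul_of_nonneg_right hαQ2 hX₀pos.le
            linarith [hX₀log2]
          calc ENNReal.ofReal (A * g (2*r)) *
              MeasureTheory.volume (Ico (0:ℝ) 1 ∩ G ⁻¹' closedBall z s)
              ≤ ENNReal.ofReal (A * g (2*r)) * 1 := mul_le_mul_right hvol _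
          _ = ENNReal.ofReal (A * g (2*r)) := mul_one _
          _ ≤ ENNReal.ofReal (g d) := by
                apply ENNReal.ofReal_le_ofReal
                rw [hg2r]
                calc A * X₀^(-γ) ≤ (M 0)^(-γ) := hcore
                _ = g r := hgr.symm
                _ ≤ g d := hgle
    -- final assembly
    refine le_iInf fun Bf => le_iInf fun hBnn => le_iInf fun hcov => ?_
    have hcover : Ico (0:ℝ) 1 ⊆
        ⋃ k, (Ico (0:ℝ) 1 ∩ G ⁻¹' closedBall (Bf k).1 (Bf k).2) := by
      intro t ht
      have hmem : G t ∈ E ∩ closedBall a r := ⟨hGE t, mem_closedBall.2 (hGa t)⟩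
      obtain ⟨k, hk⟩ := mem_iUnion.1 (hcov hmem)
      exact mem_iUnion.2 ⟨k, ht, hk⟩
    calc ENNReal.ofReal (A * g (2*r))
        = ENNReal.ofReal (A * g (2*r)) * MeasureTheory.volume (Ico (0:ℝ) 1) := by
          rw [Real.volume_Ico]; norm_num
    _ ≤ ENNReal.ofReal (A * g (2*r)) *
        ∑' k, MeasureTheory.volume (Ico (0:ℝ) 1 ∩ G ⁻¹' closedBall (Bf k).1 (Bf k).2) := by
          apply mul_le_mul_right
          exact le_trans (MeasureTheory.measure_mono hcover)
            (MeasureTheory.measure_iUnion_le _)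
    _ = ∑' k, ENNReal.ofReal (A * g (2*r)) *
        MeasureTheory.volume (Ico (0:ℝ) 1 ∩ G ⁻¹' closedBall (Bf k).1 (Bf k).2) :=
          ENNReal.tsum_mul_left.symm
    _ ≤ ∑' k, ENNReal.ofReal (g (diam (closedBall (Bf k).1 (Bf k).2))) :=
          ENNReal.tsum_le_tsum fun k => hball _ _ (hBnn k)
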